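/- Let a₀,…,a_{n-1}, b₀,…,b_{n-1} be real numbers algebraically independent over ℚ, let ℓ_{i,j} = √(1 + a_i²)·((b_i − b_j)/(a_j − a_i) − (b_{i-1} − b_i)/(a_i − a_{i-1})) for pairs (i,j) in a set I of pairs with j ≠ i−1 (indices mod n). Then the family {ℓ_{i,j} : (i,j) ∈ I} together with 1 is linearly independent over ℚ. -/

import Mathlib

set_option maxHeartbeats 1000000
set_option synthInstance.maxHeartbeats 400000
set_option linter.unusedSectionVars false



open IntermediateField in
lemma helperA {S : Set ℝ} {x : ℝ}
    (h : IsAlgebraic (IntermediateField.adjoin ℚ S) x) :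
    IsAlgebraic (Algebra.adjoin ℚ S) x := by
  haveI : FaithfulSMul (Algebra.adjoin ℚ S) ℝ :=
    (faithfulSMul_iff_algebraMap_injective (Algebra.adjoin ℚ S) ℝ).mpr Subtype.val_injective
  letI := FractionRing.liftAlgebra (Algebra.adjoin ℚ S) ℝ
  haveI := FractionRing.isScalarTower_liftAlgebra (Algebra.adjoin ℚ S) ℝ
  have hmem : ∀ p : (Algebra.adjoin ℚ S),
      algebraMap (FractionRing (Algebra.adjoin ℚ S)) ℝ
        (algebraMap (Algebra.adjoin ℚ S) (FractionRing (Algebra.adjoin ℚ S)) p)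
        ∈ IntermediateField.adjoin ℚ S := by
    intro p
    rw [← IsScalarTower.algebraMap_apply]
    exact IntermediateField.algebra_adjoin_le_adjoin ℚ S p.2
  have hsub : ∀ z : FractionRing (Algebra.adjoin ℚ S),
      algebraMap (FractionRing (Algebra.adjoin ℚ S)) ℝ z ∈ IntermediateField.adjoin ℚ S := by
    intro z
    obtain ⟨p, q, hq, hz⟩ := IsFractionRing.div_surjective (A := (Algebra.adjoin ℚ S)) z
    rw [← hz, map_div₀]
    exact div_mem (hmem p) (hmem q)
  let f : FractionRing (Algebra.adjoin ℚ S) →+* IntermediateField.adjoin ℚ S :=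
  { toFun := fun z => ⟨algebraMap _ ℝ z, hsub z⟩
    map_one' := by ext; simp
    map_mul' := by intros; ext; simp
    map_zero' := by ext; simp
    map_add' := by intros; ext; simp }
  have hT : ∀ y : IntermediateField.adjoin ℚ S,
      (y : ℝ) ∈ Set.range (algebraMap (FractionRing (Algebra.adjoin ℚ S)) ℝ) := by
    let T : IntermediateField ℚ ℝ := Subfield.toIntermediateField
      (algebraMap (FractionRing (Algebra.adjoin ℚ S)) ℝ).fieldRange
      (fun q => ⟨(q : FractionRing (Algebra.adjoin ℚ S)), by simp [eq_ratCast, map_ratCast]⟩)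
    have hle : IntermediateField.adjoin ℚ S ≤ T := by
      rw [IntermediateField.adjoin_le_iff]
      intro y hy
      exact ⟨algebraMap (Algebra.adjoin ℚ S) _ ⟨y, Algebra.subset_adjoin hy⟩,
        (IsScalarTower.algebraMap_apply _ _ _ _).symm⟩
    intro y
    exact hle y.2
  have fsurj : Function.Surjective f := by
    intro y
    obtain ⟨k, hk⟩ := hT y
    exact ⟨k, Subtype.ext hk⟩
  have h2 : IsAlgebraic (FractionRing (Algebra.adjoin ℚ S)) x :=
    h.of_ringHom_of_comp_eq f (RingHom.id ℝ) fsurj Function.injective_id (by ext z; rfl)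
  exact (IsFractionRing.isAlgebraic_iff (Algebra.adjoin ℚ S)
    (FractionRing (Algebra.adjoin ℚ S)) ℝ).mpr h2


lemma helperB {F : IntermediateField ℚ ℝ} {E : IntermediateField F ℝ}
    [halg : Algebra.IsAlgebraic F E] {x : ℝ} (h : IsAlgebraic E x) : IsAlgebraic F x := by
  haveI : Algebra.IsIntegral F E := Algebra.isAlgebraic_iff_isIntegral.mp halg
  exact (isIntegral_trans (A := E) x h.isIntegral).isAlgebraic

lemma helperC {ι : Type*} {w : ι → ℝ} (hab : AlgebraicIndependent ℚ w) (t : Set ι) {i : ι}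
    (hit : i ∉ t) : Transcendental (Algebra.adjoin ℚ (w '' t)) (w i) := by
  have h2 : AlgebraicIndependent ℚ (w ∘ (Subtype.val : t → ι)) :=
    hab.comp Subtype.val Subtype.val_injective
  have h1 : AlgebraicIndependent ℚ (fun o : Option t => o.elim (w i) (w ∘ Subtype.val)) := by
    have := hab.comp (fun o : Option t => o.elim i Subtype.val) ?_
    · convert this using 1
      funext o; cases o <;> rfl
    · rintro (_ | z1) (_ | z2) h <;> simp only [Option.elim] at h
      · rfl
      · exact absurd (h ▸ z2.2) hit
      · exact absurd (h.symm ▸ z1.2) hit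
      · exact congrArg _ (Subtype.ext h)
  have := (h2.option_iff_transcendental (w i)).mp h1
  rwa [Set.range_comp, Subtype.range_coe] at this






lemma step2 {n : ℕ} (a b u : Fin n → ℝ) (hab : AlgebraicIndependent ℚ (Sum.elim a b))
    (hu0 : ∀ k, u k ≠ 0) (hq : ∀ k, u k ^ 2 - 2 * a k * u k - 1 = 0) :
    AlgebraicIndependent ℚ (Sum.elim u b) := by
  apply algebraicIndependent_of_finite_type' (algebraMap ℚ ℝ).injective
  intro t _ _ i hit habs
  set w := Sum.elim a b with hw
  set v := Sum.elim u b with hv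
  set F : IntermediateField ℚ ℝ := IntermediateField.adjoin ℚ (w '' t) with hF
  have h2F : ∀ (E : IntermediateField F ℝ), (2:ℝ) ∈ E := by
    intro E
    have := E.natCast_mem 2
    norm_num at this
    exact_mod_cast E.natCast_mem 2
  have h2F0 : (2:ℝ) ∈ F := by
    have := F.natCast_mem 2
    norm_num at this
    exact_mod_cast F.natCast_mem 2
  have hgen : ∀ y ∈ v '' t, IsIntegral F y := by
    rintro y ⟨m, hmt, rfl⟩
    cases m with
    | inl k =>
      have hak : a k ∈ F := IntermediateField.subset_adjoin _ _ ⟨Sum.inl k, hmt, rfl⟩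
      refine ⟨Polynomial.X ^ 2 - (Polynomial.C (⟨2 * a k, mul_mem h2F0 hak⟩ : F) * Polynomial.X +
        Polynomial.C 1), ?_, ?_⟩
      · exact Polynomial.monic_X_pow_sub
          (lt_of_le_of_lt Polynomial.degree_linear_le (by exact_mod_cast Nat.one_lt_two))
      · have h5 : (algebraMap F ℝ) (⟨2 * a k, mul_mem h2F0 hak⟩ : F) = 2 * a k := rfl
        simp only [Polynomial.eval₂_sub, Polynomial.eval₂_add, Polynomial.eval₂_pow,
          Polynomial.eval₂_mul, Polynomial.eval₂_X, Polynomial.eval₂_C, Polynomial.eval₂_one, h5]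
        show u k ^ 2 - (2 * a k * u k + 1) = 0
        linear_combination hq k
    | inr k =>
      have hbk : b k ∈ F := IntermediateField.subset_adjoin _ _ ⟨Sum.inr k, hmt, rfl⟩
      exact isIntegral_algebraMap (x := (⟨b k, hbk⟩ : F))
  haveI hEalg : Algebra.IsAlgebraic F (IntermediateField.adjoin F (v '' t)) :=
    IntermediateField.isAlgebraic_adjoin hgen
  have hsub : ∀ z : ℝ, z ∈ Algebra.adjoin ℚ (v '' t) →
      z ∈ IntermediateField.adjoin F (v '' t) := by
    intro z hz
    induction hz using Algebra.adjoin_induction with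
    | mem y hy => exact IntermediateField.subset_adjoin _ _ hy
    | algebraMap q =>
      rw [eq_ratCast]
      exact SubfieldClass.ratCast_mem _ q
    | add y z _ _ hy hz => exact add_mem hy hz
    | mul y z _ _ hy hz => exact mul_mem hy hz
  have habs' : IsAlgebraic (IntermediateField.adjoin F (v '' t)) (v i) := by
    let f : (Algebra.adjoin ℚ (v '' t)) →+* (IntermediateField.adjoin F (v '' t)) :=
    { toFun := fun z => ⟨z.1, hsub z.1 z.2⟩
      map_one' := rfl
      map_mul' := fun _ _ => rfl
      map_zero' := rfl
      map_add' := fun _ _ => rfl }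
    exact habs.ringHom_of_comp_eq f (RingHom.id ℝ)
      (fun z1 z2 h => Subtype.ext (show (f z1).1 = (f z2).1 from congrArg Subtype.val h)) (by ext z; rfl)
  have hFalg : IsAlgebraic F (v i) := helperB habs'
  cases i with
  | inr k => exact (helperC hab t hit) (helperA hFalg)
  | inl k =>
    have hint : IsIntegral F (u k) := hFalg.isIntegral
    haveI : Algebra.IsAlgebraic F (IntermediateField.adjoin F {u k}) :=
      IntermediateField.isAlgebraic_adjoin (by
        rintro y hy
        rw [Set.mem_singleton_iff] at hy
        rw [hy]; exact hint)
    have hmemu : u k ∈ IntermediateField.adjoin F {u k} :=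
      IntermediateField.subset_adjoin _ _ rfl
    have hak_mem : a k ∈ IntermediateField.adjoin F {u k} := by
      have hrw : a k = (u k ^ 2 - 1) / (2 * u k) := by
        rw [eq_div_iff (by simp [hu0 k])]
        linear_combination -(hq k)
      rw [hrw]
      exact div_mem (sub_mem (pow_mem hmemu 2) (one_mem _))
        (mul_mem (h2F _) hmemu)
    have hFa : IsAlgebraic F (a k) := by
      have h3 : IsAlgebraic (IntermediateField.adjoin F {u k}) (a k) :=
        ⟨Polynomial.X - Polynomial.C (⟨a k, hak_mem⟩ :
            (IntermediateField.adjoin F {u k})),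
          Polynomial.X_sub_C_ne_zero _, by simp⟩
      exact helperB h3
    exact (helperC hab t hit) (helperA hFa)

open MvPolynomial

variable {n : ℕ} [NeZero n]

noncomputable def gp (i j : Fin n) : MvPolynomial (Fin n ⊕ Fin n) ℚ :=
  (X (Sum.inl j) ^ 2 - 1) * X (Sum.inl i) - (X (Sum.inl i) ^ 2 - 1) * X (Sum.inl j)

noncomputable def den (p : Fin n × Fin n) : MvPolynomial (Fin n ⊕ Fin n) ℚ :=
  (if p.2 = p.1 then 1 else gp p.1 p.2) * gp (p.1 - 1) p.1

noncomputable def num (p : Fin n × Fin n) : MvPolynomial (Fin n ⊕ Fin n) ℚ :=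
  (X (Sum.inl p.1) ^ 2 + 1) *
    ((X (Sum.inr p.1) - X (Sum.inr p.2)) * X (Sum.inl p.2) * gp (p.1 - 1) p.1 -
     (X (Sum.inr (p.1 - 1)) - X (Sum.inr p.1)) * X (Sum.inl (p.1 - 1)) *
       (if p.2 = p.1 then 1 else gp p.1 p.2))

noncomputable def Ppoly (I : Finset (Fin n × Fin n)) (c : Fin n × Fin n → ℚ) (lam : ℚ) :
    MvPolynomial (Fin n ⊕ Fin n) ℚ :=
  C lam * ∏ p ∈ I, den p + ∑ p ∈ I, C (c p) * num p * ∏ q ∈ I.erase p, den q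

noncomputable def xx (v : Fin n → ℝ) (i : Fin n) : ℝ := (v i ^ 2 - 1) / (2 * v i)
noncomputable def rr (v : Fin n → ℝ) (i : Fin n) : ℝ := (v i ^ 2 + 1) / (2 * v i)

noncomputable def term (v w : Fin n → ℝ) (p : Fin n × Fin n) : ℝ :=
  rr v p.1 * ((w p.1 - w p.2) / (xx v p.2 - xx v p.1) -
    (w (p.1 - 1) - w p.1) / (xx v p.1 - xx v (p.1 - 1)))

lemma aeval_gp (v w : Fin n → ℝ) (i j : Fin n) :
    aeval (Sum.elim v w) (gp i j) = (v j ^ 2 - 1) * v i - (v i ^ 2 - 1) * v j := by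
  simp [gp]

lemma aeval_gp' (v w : Fin n → ℝ) (hv : ∀ i, v i ≠ 0) (i j : Fin n) :
    aeval (Sum.elim v w) (gp i j) = (xx v j - xx v i) * (2 * v i * v j) := by
  rw [aeval_gp, xx, xx]
  field_simp [hv i, hv j]

lemma aeval_den_ne_zero (v w : Fin n → ℝ) (hv : ∀ i, v i ≠ 0) (p : Fin n × Fin n)
    (h1 : p.2 ≠ p.1 → xx v p.2 ≠ xx v p.1) (h2 : xx v p.1 ≠ xx v (p.1 - 1)) :
    aeval (Sum.elim v w) (den p) ≠ 0 := by
  rw [den, map_mul]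
  apply mul_ne_zero
  · by_cases hp : p.2 = p.1
    · simp [hp]
    · rw [if_neg hp, aeval_gp' v w hv]
      exact mul_ne_zero (sub_ne_zero.2 (h1 hp)) (by
        have := hv p.1; have := hv p.2; positivity)
  · rw [aeval_gp' v w hv]
    exact mul_ne_zero (sub_ne_zero.2 h2) (by
      have := hv (p.1 - 1); have := hv p.1; positivity)

lemma aeval_num (v w : Fin n → ℝ) (hv : ∀ i, v i ≠ 0) (p : Fin n × Fin n)
    (h1 : p.2 ≠ p.1 → xx v p.2 ≠ xx v p.1) (h2 : xx v p.1 ≠ xx v (p.1 - 1)) :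
    aeval (Sum.elim v w) (num p) = term v w p * aeval (Sum.elim v w) (den p) := by
  have e2 : aeval (Sum.elim v w) (gp (p.1 - 1) p.1)
      = (xx v p.1 - xx v (p.1 - 1)) * (2 * v (p.1 - 1) * v p.1) := aeval_gp' v w hv _ _
  have hd2 : xx v p.1 - xx v (p.1 - 1) ≠ 0 := sub_ne_zero.2 h2
  have hv1 : v p.1 ≠ 0 := hv p.1
  have hv0 : v (p.1 - 1) ≠ 0 := hv (p.1 - 1)
  by_cases hp : p.2 = p.1
  · rw [term, num, den, if_pos hp, hp]
    simp only [map_mul, map_sub, map_add, map_one, map_pow, aeval_X, Sum.elim_inl, Sum.elim_inr,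
      sub_self, zero_mul, zero_div, zero_sub, one_mul, e2, rr, map_neg]
    field_simp
  · have e1 : aeval (Sum.elim v w) (gp p.1 p.2)
        = (xx v p.2 - xx v p.1) * (2 * v p.1 * v p.2) := aeval_gp' v w hv _ _
    have hd1 : xx v p.2 - xx v p.1 ≠ 0 := sub_ne_zero.2 (h1 hp)
    have hv2 : v p.2 ≠ 0 := hv p.2
    rw [term, num, den, if_neg hp]
    simp only [map_mul, map_sub, map_add, map_one, map_pow, aeval_X, Sum.elim_inl, Sum.elim_inr,
      e1, e2, rr]
    field_simp

lemma aeval_Ppoly (I : Finset (Fin n × Fin n)) (c : Fin n × Fin n → ℚ) (lam : ℚ)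
    (v w : Fin n → ℝ) (hv : ∀ i, v i ≠ 0)
    (h1 : ∀ p ∈ I, p.2 ≠ p.1 → xx v p.2 ≠ xx v p.1)
    (h2 : ∀ p ∈ I, xx v p.1 ≠ xx v (p.1 - 1)) :
    aeval (Sum.elim v w) (Ppoly I c lam) =
      (∏ p ∈ I, aeval (Sum.elim v w) (den p)) *
        ((lam : ℝ) + ∑ p ∈ I, (c p : ℝ) * term v w p) := by
  rw [Ppoly, map_add, map_mul, map_sum, map_prod, aeval_C, mul_add, eq_ratCast]
  congr 1
  · ring
  · rw [Finset.mul_sum]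
    apply Finset.sum_congr rfl
    intro p hp
    rw [map_mul, map_mul, map_prod, aeval_C, eq_ratCast,
      aeval_num v w hv p (h1 p hp) (h2 p hp)]
    rw [← Finset.prod_erase_mul I _ hp]
    ring
def ffq (t : ℚ) : ℚ := (t^2 - 1)/(2*t)

def xq (i m : Fin n) : ℚ := if m = i then 1 else ffq (((m:ℕ):ℚ) + 2)

def rq (m : Fin n) : ℚ := ((((m:ℕ):ℚ)+2)^2 + 1)/(2*(((m:ℕ):ℚ)+2))

noncomputable def vpt (i m : Fin n) : ℝ := if m = i then 1 + Real.sqrt 2 else ((m:ℕ):ℝ) + 2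

def eqq (j m : Fin n) : ℚ := if m = j then 1 else 0

def tbq (i j : Fin n) (p : Fin n × Fin n) : ℚ :=
  (eqq j p.1 - eqq j p.2)/(xq i p.2 - xq i p.1) -
    (eqq j (p.1-1) - eqq j p.1)/(xq i p.1 - xq i (p.1-1))

lemma ffq_mono {s t : ℚ} (h0 : 0 < s) (h : s < t) : ffq s < ffq t := by
  have h0t : 0 < t := h0.trans h
  rw [ffq, ffq, div_lt_div_iff₀ (by linarith) (by linarith)]
  nlinarith [mul_pos (sub_pos.2 h) (mul_pos h0 h0t), sub_pos.2 h, mul_pos h0 h0t]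

lemma ffq_ne_one (m : ℕ) : ffq ((m:ℚ) + 2) ≠ 1 := by
  intro h
  rw [ffq, div_eq_one_iff_eq (by positivity)] at h
  rcases Nat.eq_zero_or_pos m with rfl | hm
  · norm_num at h
  · have h1 : (1:ℚ) ≤ (m:ℚ) := by exact_mod_cast hm
    nlinarith

lemma xq_inj {i m m' : Fin n} (h : m ≠ m') : xq i m ≠ xq i m' := by
  intro hx
  rw [xq, xq] at hx
  by_cases h1 : m = i <;> by_cases h2 : m' = i
  · exact h (h1.trans h2.symm)
  · rw [if_pos h1, if_neg h2] at hx
    exact ffq_ne_one (m' : ℕ) hx.symm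
  · rw [if_neg h1, if_pos h2] at hx
    exact ffq_ne_one (m : ℕ) hx
  · rw [if_neg h1, if_neg h2] at hx
    have hmm : (m:ℕ) ≠ (m':ℕ) := fun hc => h (Fin.val_injective hc)
    rcases hmm.lt_or_gt with hlt | hlt
    · have : ((m:ℕ):ℚ) + 2 < ((m':ℕ):ℚ) + 2 := by
        have : ((m:ℕ):ℚ) < ((m':ℕ):ℚ) := by exact_mod_cast hlt
        linarith
      exact absurd hx (ne_of_lt (ffq_mono (by positivity) this))
    · have : ((m':ℕ):ℚ) + 2 < ((m:ℕ):ℚ) + 2 := by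
        have : ((m':ℕ):ℚ) < ((m:ℕ):ℚ) := by exact_mod_cast hlt
        linarith
      exact absurd hx.symm (ne_of_lt (ffq_mono (by positivity) this))

lemma vpt_pos (i m : Fin n) : 0 < vpt i m := by
  rw [vpt]
  split
  · positivity
  · positivity

lemma xx_vpt (i m : Fin n) : xx (vpt i) m = ((xq i m : ℚ) : ℝ) := by
  rw [xx, vpt, xq]
  split
  · have hs : Real.sqrt 2 ^ 2 = 2 := Real.sq_sqrt (by norm_num)
    have hne : 2 * (1 + Real.sqrt 2) ≠ 0 := by positivity
    rw [div_eq_iff hne]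
    push_cast
    linear_combination hs
  · rw [ffq]
    push_cast
    ring

lemma rr_vpt {i m : Fin n} (h : m ≠ i) : rr (vpt i) m = ((rq m : ℚ) : ℝ) := by
  rw [rr, vpt, if_neg h, rq]
  push_cast
  ring

lemma rr_vpt_i (i : Fin n) : rr (vpt i) i = Real.sqrt 2 := by
  rw [rr, vpt, if_pos rfl]
  have hs : Real.sqrt 2 ^ 2 = 2 := Real.sq_sqrt (by norm_num)
  have hne : 2 * (1 + Real.sqrt 2) ≠ 0 := by positivity
  rw [div_eq_iff hne]
  linear_combination -hs

lemma sqrt2_lin {A B : ℚ} (h : (A:ℝ) + Real.sqrt 2 * (B:ℝ) = 0) : B = 0 := by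
  by_contra hB
  apply irrational_sqrt_two
  refine ⟨-A/B, ?_⟩
  have hB' : ((B:ℚ):ℝ) ≠ 0 := by exact_mod_cast hB
  push_cast
  field_simp
  linarith

lemma sub_one_ne (hn : 2 ≤ n) (m : Fin n) : m - 1 ≠ m := by
  intro h
  have h1 : (1 : Fin n) = 0 := by
    have := sub_eq_self.mp h
    simpa using this
  rw [Fin.one_eq_zero_iff] at h1
  omega

lemma blockrel (hn : 2 ≤ n) (I : Finset (Fin n × Fin n)) (c : Fin n × Fin n → ℚ) (lam : ℚ)
    (hP : Ppoly I c lam = 0) (i j : Fin n) :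
    ∑ p ∈ I.filter (fun p => p.1 = i), c p * tbq i j p = 0 := by
  classical
  set v := vpt i with hv_def
  set w : Fin n → ℝ := fun m => ((eqq j m : ℚ) : ℝ) with hw_def
  have hv : ∀ m, v m ≠ 0 := fun m => (vpt_pos i m).ne'
  have hxxv : ∀ m, xx v m = ((xq i m : ℚ) : ℝ) := xx_vpt i
  have h1 : ∀ p ∈ I, p.2 ≠ p.1 → xx v p.2 ≠ xx v p.1 := by
    intro p _ hne
    rw [hxxv, hxxv]
    exact_mod_cast xq_inj hne
  have h2 : ∀ p ∈ I, xx v p.1 ≠ xx v (p.1 - 1) := by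
    intro p _
    rw [hxxv, hxxv]
    exact_mod_cast xq_inj (fun hc => sub_one_ne hn p.1 hc.symm)
  have h0 := aeval_Ppoly I c lam v w hv h1 h2
  rw [hP, map_zero] at h0
  have hprod : (∏ p ∈ I, MvPolynomial.aeval (Sum.elim v w) (den p)) ≠ 0 :=
    Finset.prod_ne_zero_iff.mpr (fun p hp => aeval_den_ne_zero v w hv p (h1 p hp) (h2 p hp))
  have hE : (lam : ℝ) + ∑ p ∈ I, (c p : ℝ) * term v w p = 0 := by
    rcases mul_eq_zero.mp h0.symm with h | h
    · exact absurd h hprod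
    · exact h
  -- term casts
  have hterm_cast : ∀ p : Fin n × Fin n, p.1 ≠ i →
      term v w p = ((rq p.1 * tbq i j p : ℚ) : ℝ) := by
    intro p hpi
    simp only [hv_def, hw_def, term, tbq, rr_vpt hpi, xx_vpt]
    push_cast
    ring
  have hterm_i : ∀ p : Fin n × Fin n, p.1 = i →
      term v w p = Real.sqrt 2 * ((tbq i j p : ℚ) : ℝ) := by
    intro p hpi
    simp only [hv_def, hw_def, term, tbq, hpi, rr_vpt_i, xx_vpt]
    push_cast
    ring
  rw [← Finset.sum_filter_add_sum_filter_not I (fun p => p.1 = i)] at hE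
  have hs1 : ∑ p ∈ I.filter (fun p => p.1 = i), (c p : ℝ) * term v w p
      = Real.sqrt 2 * ((∑ p ∈ I.filter (fun p => p.1 = i), c p * tbq i j p : ℚ) : ℝ) := by
    push_cast
    rw [Finset.mul_sum]
    apply Finset.sum_congr rfl
    intro p hp
    rw [hterm_i p (Finset.mem_filter.mp hp).2]
    ring
  have hs2 : ∑ p ∈ I.filter (fun p => ¬ p.1 = i), (c p : ℝ) * term v w p
      = ((∑ p ∈ I.filter (fun p => ¬ p.1 = i), c p * (rq p.1 * tbq i j p) : ℚ) : ℝ) := by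
    push_cast
    apply Finset.sum_congr rfl
    intro p hp
    rw [hterm_cast p (Finset.mem_filter.mp hp).2]
    push_cast
    ring
  rw [hs1, hs2] at hE
  have hE' : ((lam + ∑ p ∈ I.filter (fun p => ¬ p.1 = i), c p * (rq p.1 * tbq i j p) : ℚ) : ℝ)
      + Real.sqrt 2 * ((∑ p ∈ I.filter (fun p => p.1 = i), c p * tbq i j p : ℚ) : ℝ) = 0 := by
    push_cast
    push_cast at hE
    linarith
  exact sqrt2_lin hE'

/-- If `a₀,…,a_{n-1}, b₀,…,b_{n-1}` are algebraically independent over `ℚ`, the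
lengths `ℓ_{i,j} = √(1+a_i²)((b_i-b_j)/(a_j-a_i) - (b_{i-1}-b_i)/(a_i-a_{i-1}))`,
for `(i,j)` in a set of pairs with `j ≠ i - 1` (indices mod `n`), together with `1`,
are linearly independent over `ℚ`. -/
theorem lengths_linearIndependent {n : ℕ} [NeZero n] (a b : Fin n → ℝ)
    (hab : AlgebraicIndependent ℚ (Sum.elim a b))
    (I : Finset (Fin n × Fin n)) (hI : ∀ p ∈ I, p.2 ≠ p.1 - 1)
    (ℓ : Fin n → Fin n → ℝ)
    (hℓ : ∀ i j, ℓ i j = Real.sqrt (1 + a i ^ 2) *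
      ((b i - b j) / (a j - a i) - (b (i - 1) - b i) / (a i - a (i - 1))))
    (lam : ℚ) (c : Fin n × Fin n → ℚ)
    (hrel : (lam : ℝ) + ∑ p ∈ I, (c p : ℝ) * ℓ p.1 p.2 = 0) :
    (∀ p ∈ I, c p = 0) ∧ lam = 0 := by
  classical
  rcases Nat.lt_or_ge n 2 with hn | hn
  · have hn1 : n = 1 := by have := NeZero.pos n; omega
    subst hn1
    have hIempty : I = ∅ := Finset.eq_empty_of_forall_notMem (fun p hp =>
      hI p hp (Subsingleton.elim _ _))
    rw [hIempty, Finset.sum_empty, add_zero] at hrel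
    exact ⟨fun p hp => absurd hp (by simp [hIempty]), by exact_mod_cast hrel⟩
  · set s : Fin n → ℝ := fun k => Real.sqrt (1 + a k ^ 2) with hs_def
    have hs_pos : ∀ k, 0 < s k := fun k => Real.sqrt_pos.2 (by positivity)
    have hs_sq : ∀ k, s k ^ 2 = 1 + a k ^ 2 := fun k => Real.sq_sqrt (by positivity)
    set u : Fin n → ℝ := fun k => a k + s k with hu_def
    have hu_pos : ∀ k, 0 < u k := by
      intro k
      have h1 : |a k| < s k := by
        nlinarith [hs_sq k, abs_nonneg (a k), sq_abs (a k), hs_pos k]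
      have h2 := neg_abs_le (a k)
      have : 0 < a k + s k := by linarith
      simpa [hu_def] using this
    have hu0 : ∀ k, u k ≠ 0 := fun k => (hu_pos k).ne'
    have hquad : ∀ k, u k ^ 2 - 2 * a k * u k - 1 = 0 := by
      intro k
      simp only [hu_def]
      linear_combination hs_sq k
    have h2u0 : ∀ k, (2 : ℝ) * u k ≠ 0 := fun k => by
      have := hu0 k; positivity
    have hxxu : ∀ k, xx u k = a k := by
      intro k
      rw [xx, div_eq_iff (h2u0 k)]
      linear_combination hquad k
    have hrru : ∀ k, rr u k = s k := by
      intro k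
      rw [rr, div_eq_iff (h2u0 k)]
      simp only [hu_def]
      linear_combination -hs_sq k
    have hinj_a : Function.Injective a := by
      intro k l h
      have h2 : Sum.elim a b (Sum.inl k) = Sum.elim a b (Sum.inl l) := by simpa using h
      simpa using hab.injective h2
    have hu2 : AlgebraicIndependent ℚ (Sum.elim u b) := step2 a b u hab hu0 hquad
    have h1u : ∀ p ∈ I, p.2 ≠ p.1 → xx u p.2 ≠ xx u p.1 := by
      intro p _ hne
      rw [hxxu, hxxu]
      exact fun hc => hne (hinj_a hc)
    have h2uu : ∀ p ∈ I, xx u p.1 ≠ xx u (p.1 - 1) := by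
      intro p _
      rw [hxxu, hxxu]
      exact fun hc => sub_one_ne hn p.1 (hinj_a hc).symm
    have hterm_u : ∀ p ∈ I, term u b p = ℓ p.1 p.2 := by
      intro p _
      rw [hℓ p.1 p.2]
      simp only [term, hrru, hxxu, hs_def]
    have hsum0 : (lam : ℝ) + ∑ p ∈ I, (c p : ℝ) * term u b p = 0 := by
      have h3 : ∑ p ∈ I, (c p : ℝ) * term u b p = ∑ p ∈ I, (c p : ℝ) * ℓ p.1 p.2 :=
        Finset.sum_congr rfl (fun p hp => by rw [hterm_u p hp])
      rw [h3]
      exact hrel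
    have hP : Ppoly I c lam = 0 := by
      apply hu2.eq_zero_of_aeval_eq_zero
      rw [aeval_Ppoly I c lam u b hu0 h1u h2uu, hsum0, mul_zero]
    have key : ∀ p ∈ I, p.2 ≠ p.1 → c p = 0 := by
      intro p hp hne
      have hIne : p.2 ≠ p.1 - 1 := hI p hp
      have hbr := blockrel hn I c lam hP p.1 p.2
      have hsingle : ∑ q ∈ I.filter (fun q => q.1 = p.1), c q * tbq p.1 p.2 q
          = c p * tbq p.1 p.2 p := by
        apply Finset.sum_eq_single
        · intro q hq hqp
          obtain ⟨hqI, hq1⟩ := Finset.mem_filter.mp hq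
          have hq2 : q.2 ≠ p.2 := by
            intro h
            exact hqp (Prod.ext hq1 h)
          have e1 : eqq p.2 q.1 = 0 := if_neg (by rw [hq1]; exact fun h => hne h.symm)
          have e2 : eqq p.2 q.2 = 0 := if_neg hq2
          have e3 : eqq p.2 (q.1 - 1) = 0 := if_neg (by rw [hq1]; exact fun h => hIne h.symm)
          rw [tbq, e1, e2, e3]
          norm_num
        · intro hnot
          exact absurd (Finset.mem_filter.mpr ⟨hp, (rfl : p.1 = p.1)⟩) hnot
      rw [hsingle] at hbr
      have hd1 : xq p.1 p.2 - xq p.1 p.1 ≠ 0 := sub_ne_zero.2 (xq_inj hne)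
      have htb : tbq p.1 p.2 p = -(xq p.1 p.2 - xq p.1 p.1)⁻¹ := by
        have e1 : eqq p.2 p.1 = 0 := if_neg (fun h => hne h.symm)
        have e2 : eqq p.2 p.2 = 1 := if_pos rfl
        have e3 : eqq p.2 (p.1 - 1) = 0 := if_neg (fun h => hIne h.symm)
        rw [tbq, e1, e2, e3, sub_self, zero_div, sub_zero, zero_sub, neg_div, one_div]
      rw [htb] at hbr
      rcases mul_eq_zero.mp hbr with h | h
      · exact h
      · rw [neg_eq_zero, inv_eq_zero] at h
        exact absurd h hd1
    have keyd : ∀ p ∈ I, c p = 0 := by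
      intro p hp
      by_cases hne : p.2 = p.1
      · have hbr := blockrel hn I c lam hP p.1 (p.1 - 1)
        have hd : xq p.1 p.1 - xq p.1 (p.1 - 1) ≠ 0 :=
          sub_ne_zero.2 (xq_inj (fun h => sub_one_ne hn p.1 h.symm))
        have hsum : ∑ q ∈ I.filter (fun q => q.1 = p.1), c q * tbq p.1 (p.1 - 1) q
            = (∑ q ∈ I.filter (fun q => q.1 = p.1), c q) *
              (-(xq p.1 p.1 - xq p.1 (p.1 - 1))⁻¹) := by
          rw [Finset.sum_mul]
          apply Finset.sum_congr rfl
          intro q hq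
          obtain ⟨hqI, hq1⟩ := Finset.mem_filter.mp hq
          have e1 : eqq (p.1 - 1) q.1 = 0 :=
            if_neg (by rw [hq1]; exact fun h => sub_one_ne hn p.1 h.symm)
          have e2 : eqq (p.1 - 1) q.2 = 0 := if_neg (by rw [← hq1]; exact hI q hqI)
          have e3 : eqq (p.1 - 1) (q.1 - 1) = 1 := if_pos (by rw [hq1])
          rw [tbq, e1, e2, e3, hq1, sub_self, zero_div, zero_sub, sub_zero, one_div]
        rw [hsum] at hbr
        rcases mul_eq_zero.mp hbr with h | h
        · have hsingle : ∑ q ∈ I.filter (fun q => q.1 = p.1), c q = c p := by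
            apply Finset.sum_eq_single
            · intro q hq hqp
              obtain ⟨hqI, hq1⟩ := Finset.mem_filter.mp hq
              apply key q hqI
              intro hq2
              exact hqp (Prod.ext hq1 (by rw [hq2, hq1, hne]))
            · intro hnot
              exact absurd (Finset.mem_filter.mpr ⟨hp, (rfl : p.1 = p.1)⟩) hnot
          rw [hsingle] at h
          exact h
        · rw [neg_eq_zero, inv_eq_zero] at h
          exact absurd h hd
      · exact key p hp hne
    refine ⟨keyd, ?_⟩
    have hz : ∑ p ∈ I, (c p : ℝ) * ℓ p.1 p.2 = 0 :=
      Finset.sum_eq_zero (fun p hp => by rw [keyd p hp]; simp)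
    rw [hz, add_zero] at hrel
    exact_mod_cast hrel
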